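/- For every ε > 0, the number of rational numbers x = α/β in lowest terms with |α| ≤ X, 1 ≤ β ≤ X, and rad(β) ≤ X^{1−2ε} is O_ε(X^{2−ε}). -/

import Mathlib

/-- The radical of a positive integer: the product of its distinct prime divisors. -/
def rad (n : ℕ) : ℕ := ∏ p ∈ n.primeFactors, p

open Finset

lemma rad_pos (n : ℕ) : 0 < rad n :=
  Finset.prod_pos fun p hp => (Nat.prime_of_mem_primeFactors hp).pos

lemma squarefree_le_rad {u n : ℕ} (hu : Squarefree u) (hdvd : u ∣ n) (hn : n ≠ 0) :
    u ≤ rad n := by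
  have h1 : u ∣ rad n := by
    rw [← Nat.prod_primeFactors_of_squarefree hu]
    exact Finset.prod_dvd_prod_of_subset _ _ _ (Nat.primeFactors_mono hdvd hn)
  exact Nat.le_of_dvd (rad_pos n) h1

lemma exists_decomp {n : ℕ} (hn : n ≠ 0) :
    ∃ u w z : ℕ, u * w ^ 2 * z ^ 4 = n ∧ 0 < u ∧ 0 < w ∧ 0 < z ∧
      u ≤ rad n ∧ w ≤ n ∧ z ≤ n := by
  obtain ⟨u, c, hc, hu⟩ := Nat.sq_mul_squarefree n
  obtain ⟨w, z, hz, hw⟩ := Nat.sq_mul_squarefree c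
  have heq : u * w ^ 2 * z ^ 4 = n := by rw [← hc, ← hz]; ring
  have hu0 : u ≠ 0 := by rintro rfl; simp at heq; exact hn heq.symm
  have hw0 : w ≠ 0 := by rintro rfl; simp at heq; exact hn heq.symm
  have hz0 : z ≠ 0 := by rintro rfl; simp at heq; exact hn heq.symm
  have hud : u ∣ n := ⟨w ^ 2 * z ^ 4, by rw [← heq]; ring⟩
  have hwd : w ∣ n := ⟨u * w * z ^ 4, by rw [← heq]; ring⟩
  have hzd : z ∣ n := ⟨u * w ^ 2 * z ^ 3, by rw [← heq]; ring⟩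
  exact ⟨u, w, z, heq, Nat.pos_of_ne_zero hu0, Nat.pos_of_ne_zero hw0, Nat.pos_of_ne_zero hz0,
    squarefree_le_rad hu hud hn, Nat.le_of_dvd (Nat.pos_of_ne_zero hn) hwd,
    Nat.le_of_dvd (Nat.pos_of_ne_zero hn) hzd⟩

lemma sum_inv_sq_le (m N : ℕ) : ∑ w ∈ Icc (m+1) N, ((w:ℝ) ^ 2)⁻¹ ≤ 2 / (m + 1) := by
  calc ∑ w ∈ Icc (m+1) N, ((w:ℝ) ^ 2)⁻¹ ≤ ∑ w ∈ Ioo m (N+1), ((w:ℝ) ^ 2)⁻¹ := by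
        apply Finset.sum_le_sum_of_subset_of_nonneg
        · intro x hx; simp only [mem_Icc, mem_Ioo] at *; omega
        · intros; positivity
    _ ≤ 2 / (m + 1) := by simpa using sum_Ioo_inv_sq_le (α := ℝ) m (N+1)
lemma sum_min_le (N : ℕ) {P Y : ℝ} (hP : 0 < P) (hY : 0 < Y) :
    ∑ w ∈ Icc 1 N, min Y (P / (w:ℝ) ^ 2) ≤ 3 * Real.sqrt (P * Y) := by
  set t := Real.sqrt (P / Y) with ht
  have ht0 : 0 < t := Real.sqrt_pos.2 (div_pos hP hY)
  set m := ⌊t⌋₊ with hm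
  have hts : t * Real.sqrt (P * Y) = P := by
    rw [ht, ← Real.sqrt_mul (by positivity)]
    rw [show P / Y * (P * Y) = P ^ 2 by field_simp]
    exact Real.sqrt_sq hP.le
  have step1 : ∑ w ∈ Icc 1 N, min Y (P / (w:ℝ) ^ 2)
      ≤ ∑ w ∈ Icc 1 N, (if w ≤ m then Y else P / (w:ℝ) ^ 2) := by
    apply Finset.sum_le_sum
    intro w _
    split
    · exact min_le_left _ _
    · exact min_le_right _ _
  rw [Finset.sum_ite] at step1
  have hA : ∑ _w ∈ (Icc 1 N).filter (fun w => w ≤ m), Y ≤ Real.sqrt (P * Y) := by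
    rw [Finset.sum_const, nsmul_eq_mul]
    have hcard : ((Icc 1 N).filter (fun w => w ≤ m)).card ≤ m := by
      have : (Icc 1 N).filter (fun w => w ≤ m) ⊆ Icc 1 m := by
        intro x hx; simp only [mem_filter, mem_Icc] at *; omega
      simpa using Finset.card_le_card this
    calc (((Icc 1 N).filter (fun w => w ≤ m)).card : ℝ) * Y ≤ (m : ℝ) * Y := by
          apply mul_le_mul_of_nonneg_right _ hY.le; exact_mod_cast hcard
      _ ≤ t * Y := mul_le_mul_of_nonneg_right (Nat.floor_le ht0.le) hY.le
      _ = Real.sqrt (P * Y) := by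
          rw [ht, show Real.sqrt (P / Y) * Y = Real.sqrt (P / Y) * Real.sqrt (Y ^ 2) by
            rw [Real.sqrt_sq hY.le], ← Real.sqrt_mul (by positivity),
            show P / Y * Y ^ 2 = P * Y by field_simp]
  have hB : ∑ w ∈ (Icc 1 N).filter (fun w => ¬ w ≤ m), P / (w:ℝ) ^ 2
      ≤ 2 * Real.sqrt (P * Y) := by
    have hsub : (Icc 1 N).filter (fun w => ¬ w ≤ m) ⊆ Icc (m+1) N := by
      intro x hx; simp only [mem_filter, mem_Icc] at *; omega
    calc ∑ w ∈ (Icc 1 N).filter (fun w => ¬ w ≤ m), P / (w:ℝ) ^ 2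
        ≤ ∑ w ∈ Icc (m+1) N, P / (w:ℝ) ^ 2 := by
          apply Finset.sum_le_sum_of_subset_of_nonneg hsub
          intro w hw _
          have : 1 ≤ w := by simp only [mem_Icc] at hw; omega
          positivity
      _ = P * ∑ w ∈ Icc (m+1) N, ((w:ℝ) ^ 2)⁻¹ := by
          rw [Finset.mul_sum]; apply Finset.sum_congr rfl; intros; rw [div_eq_mul_inv]
      _ ≤ P * (2 / (m + 1)) := by
          apply mul_le_mul_of_nonneg_left (sum_inv_sq_le m N) hP.le
      _ ≤ 2 * Real.sqrt (P * Y) := by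
          have hm1 : t ≤ (m : ℝ) + 1 := (Nat.lt_floor_add_one t).le
          -- P * (2/(m+1)) ≤ 2 √(PY)  ⟺  2 P ≤ 2 √(PY) (m+1) ⟸ P = t √(PY) ≤ (m+1)√(PY)
          have h2 : P ≤ Real.sqrt (P * Y) * ((m:ℝ) + 1) := by
            calc P = t * Real.sqrt (P * Y) := hts.symm
              _ ≤ ((m:ℝ)+1) * Real.sqrt (P * Y) :=
                  mul_le_mul_of_nonneg_right hm1 (Real.sqrt_nonneg _)
              _ = Real.sqrt (P * Y) * ((m:ℝ)+1) := by ring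
          calc P * (2 / ((m:ℝ) + 1)) = 2 * P / ((m:ℝ)+1) := by ring
            _ ≤ 2 * Real.sqrt (P * Y) := by
                rw [div_le_iff₀ (by positivity)]
                nlinarith [Real.sqrt_nonneg (P*Y)]
  calc ∑ w ∈ Icc 1 N, min Y (P / (w:ℝ) ^ 2) ≤ _ := step1
    _ ≤ Real.sqrt (P * Y) + 2 * Real.sqrt (P * Y) := add_le_add hA hB
    _ = 3 * Real.sqrt (P * Y) := by ring

lemma card_D_le (X : ℝ) (hX : 1 ≤ X) {Y : ℝ} (hY : 0 < Y) :
    ((((Icc 1 ⌊X⌋₊)).filter (fun b => (rad b : ℝ) ≤ Y)).card : ℝ)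
      ≤ 6 * Real.sqrt (X * Y) := by
  have hX0 : (0:ℝ) < X := lt_of_lt_of_le one_pos hX
  set N := ⌊X⌋₊ with hN
  set U := ⌊Y⌋₊ with hU
  set D := (Icc 1 N).filter (fun b => (rad b : ℝ) ≤ Y) with hD
  set E : Finset ((ℕ × ℕ) × ℕ) :=
    ((Icc 1 N ×ˢ Icc 1 N) ×ˢ Icc 1 U).filter
      (fun t => ((t.2 * t.1.1 ^ 2 * t.1.2 ^ 4 : ℕ) : ℝ) ≤ X) with hE
  -- Step A : card D ≤ card E
  have hdec : ∀ b : ℕ, ∃ p : (ℕ × ℕ) × ℕ, b ∈ D →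
      p ∈ E ∧ p.2 * p.1.1 ^ 2 * p.1.2 ^ 4 = b := by
    intro b
    by_cases hb : b ∈ D
    · simp only [hD, mem_filter, mem_Icc] at hb
      obtain ⟨⟨hb1, hbN⟩, hbr⟩ := hb
      have hb0 : b ≠ 0 := by omega
      obtain ⟨u, w, z, heq, hu0, hw0, hz0, hur, hwn, hzn⟩ := exists_decomp hb0
      refine ⟨((w, z), u), fun _ => ⟨?_, heq⟩⟩
      simp only [hE, mem_filter, mem_product, mem_Icc]
      have hbX : (b : ℝ) ≤ X := le_trans (Nat.cast_le.2 hbN) (Nat.floor_le hX0.le)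
      refine ⟨⟨⟨⟨hw0, le_trans hwn hbN⟩, ⟨hz0, le_trans hzn hbN⟩⟩, ⟨hu0, ?_⟩⟩, ?_⟩
      · exact Nat.le_floor (le_trans (Nat.cast_le.2 hur) hbr)
      · rw [heq]; exact hbX
    · exact ⟨((1,1),1), fun h => absurd h hb⟩
  choose f hf using hdec
  have hcardDE : D.card ≤ E.card := by
    apply Finset.card_le_card_of_injOn f (fun b hb => (hf b hb).1)
    intro b1 h1 b2 h2 he
    rw [← (hf b1 h1).2, ← (hf b2 h2).2, he]
  -- Step B : card E ≤ ∑ over (w,z) of min Y (X / (w^2 z^4))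
  have hfib : ∀ t ∈ E, t.1 ∈ Icc 1 N ×ˢ Icc 1 N := by
    intro t ht
    simp only [hE, mem_filter, mem_product] at ht
    simp only [mem_product]
    exact ht.1.1
  have hcardE : E.card = ∑ p ∈ Icc 1 N ×ˢ Icc 1 N, (E.filter (fun t => t.1 = p)).card :=
    Finset.card_eq_sum_card_fiberwise hfib
  have hfibbound : ∀ p ∈ Icc 1 N ×ˢ Icc 1 N,
      ((E.filter (fun t => t.1 = p)).card : ℝ)
        ≤ min Y (X / ((p.1:ℝ) ^ 2 * (p.2:ℝ) ^ 4)) := by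
    rintro ⟨w, z⟩ hp
    simp only [mem_product, mem_Icc] at hp
    have hw1 : 1 ≤ w := hp.1.1
    have hz1 : 1 ≤ z := hp.2.1
    have hden : (0:ℝ) < (w:ℝ) ^ 2 * (z:ℝ) ^ 4 := by positivity
    have hinj : (E.filter (fun t => t.1 = (w, z))).card
        ≤ (Icc 1 (min U ⌊X / ((w:ℝ) ^ 2 * (z:ℝ) ^ 4)⌋₊)).card := by
      apply Finset.card_le_card_of_injOn (fun t => t.2)
      · rintro ⟨⟨w', z'⟩, u⟩ ht
        simp only [Finset.mem_coe, mem_filter, hE, mem_product, mem_Icc, Prod.mk.injEq] at ht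
        obtain ⟨⟨⟨_, ⟨hu1, huU⟩⟩, hle⟩, hw', hz'⟩ := ht
        subst hw'; subst hz'
        simp only [Finset.mem_coe, mem_Icc, le_min_iff]
        refine ⟨hu1, huU, ?_⟩
        exact Nat.le_floor (by push_cast at hle ⊢; rw [le_div_iff₀ hden]; linarith [hle])
      · rintro ⟨⟨w1, z1⟩, u1⟩ h1 ⟨⟨w2, z2⟩, u2⟩ h2 he
        simp only [Finset.coe_filter, Set.mem_setOf_eq, Prod.mk.injEq] at h1 h2
        simp only at he
        obtain ⟨-, hw1', hz1'⟩ := h1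
        obtain ⟨-, hw2', hz2'⟩ := h2
        subst hw1'; subst hz1'; subst hw2'; subst hz2'; subst he; rfl
    calc ((E.filter (fun t => t.1 = (w, z))).card : ℝ)
        ≤ ((Icc 1 (min U ⌊X / ((w:ℝ) ^ 2 * (z:ℝ) ^ 4)⌋₊)).card : ℝ) := Nat.cast_le.2 hinj
      _ = (min U ⌊X / ((w:ℝ) ^ 2 * (z:ℝ) ^ 4)⌋₊ : ℕ) := by rw [Nat.card_Icc]; norm_num
      _ ≤ min Y (X / ((w:ℝ) ^ 2 * (z:ℝ) ^ 4)) := by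
          rw [Nat.cast_min]
          exact min_le_min (Nat.floor_le hY.le) (Nat.floor_le (by positivity))
  -- Step C : evaluate the sum
  have hsum : ∑ p ∈ Icc 1 N ×ˢ Icc 1 N, min Y (X / ((p.1:ℝ) ^ 2 * (p.2:ℝ) ^ 4))
      ≤ 6 * Real.sqrt (X * Y) := by
    rw [Finset.sum_product]
    rw [Finset.sum_comm]
    have inner : ∀ z ∈ Icc 1 N,
        ∑ w ∈ Icc 1 N, min Y (X / ((w:ℝ) ^ 2 * (z:ℝ) ^ 4))
          ≤ 3 * Real.sqrt (X * Y) * ((z:ℝ) ^ 2)⁻¹ := by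
      intro z hz
      have hz1 : 1 ≤ z := (mem_Icc.1 hz).1
      have hz0 : (0:ℝ) < (z:ℝ) := by exact_mod_cast hz1
      have hP : (0:ℝ) < X / (z:ℝ) ^ 4 := by positivity
      have : ∑ w ∈ Icc 1 N, min Y (X / ((w:ℝ) ^ 2 * (z:ℝ) ^ 4))
          = ∑ w ∈ Icc 1 N, min Y ((X / (z:ℝ) ^ 4) / (w:ℝ) ^ 2) := by
        apply Finset.sum_congr rfl; intro w _
        congr 1
        rw [div_div]
        ring_nf
      rw [this]
      calc ∑ w ∈ Icc 1 N, min Y ((X / (z:ℝ) ^ 4) / (w:ℝ) ^ 2)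
          ≤ 3 * Real.sqrt ((X / (z:ℝ) ^ 4) * Y) := sum_min_le N hP hY
        _ = 3 * Real.sqrt (X * Y) * ((z:ℝ) ^ 2)⁻¹ := by
            rw [show X / (z:ℝ) ^ 4 * Y = (X * Y) / ((z:ℝ) ^ 2) ^ 2 by ring,
              Real.sqrt_div (by positivity), Real.sqrt_sq (by positivity)]
            ring
    calc ∑ z ∈ Icc 1 N, ∑ w ∈ Icc 1 N, min Y (X / ((w:ℝ) ^ 2 * (z:ℝ) ^ 4))
        ≤ ∑ z ∈ Icc 1 N, 3 * Real.sqrt (X * Y) * ((z:ℝ) ^ 2)⁻¹ :=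
          Finset.sum_le_sum inner
      _ = 3 * Real.sqrt (X * Y) * ∑ z ∈ Icc 1 N, ((z:ℝ) ^ 2)⁻¹ := by
          rw [Finset.mul_sum]
      _ ≤ 3 * Real.sqrt (X * Y) * 2 := by
          apply mul_le_mul_of_nonneg_left _ (by positivity)
          have := sum_inv_sq_le 0 N
          simpa using this
      _ = 6 * Real.sqrt (X * Y) := by ring
  calc (D.card : ℝ) ≤ (E.card : ℝ) := Nat.cast_le.2 hcardDE
    _ = ∑ p ∈ Icc 1 N ×ˢ Icc 1 N, ((E.filter (fun t => t.1 = p)).card : ℝ) := by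
        rw [hcardE]; push_cast; rfl
    _ ≤ ∑ p ∈ Icc 1 N ×ˢ Icc 1 N, min Y (X / ((p.1:ℝ) ^ 2 * (p.2:ℝ) ^ 4)) :=
        Finset.sum_le_sum hfibbound
    _ ≤ 6 * Real.sqrt (X * Y) := hsum

/-- the number of rationals `x = α/β` in lowest terms with `|α| ≤ X`,
`1 ≤ β ≤ X` and `rad(β) ≤ X^{1-2ε}` is `O_ε(X^{2-ε})`. -/
theorem stmt8 (ε : ℝ) (hε : 0 < ε) :
    ∃ C > (0 : ℝ), ∀ X : ℝ, 1 ≤ X →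
      (({x : ℚ | (|x.num| : ℝ) ≤ X ∧ (x.den : ℝ) ≤ X ∧
          (rad x.den : ℝ) ≤ X ^ (1 - 2 * ε)}).ncard : ℝ) ≤ C * X ^ (2 - ε) := by
  refine ⟨18, by norm_num, ?_⟩
  intro X hX
  have hX0 : (0:ℝ) < X := by linarith
  set Y : ℝ := X ^ (1 - 2 * ε) with hY
  have hY0 : 0 < Y := Real.rpow_pos_of_pos hX0 _
  set S : Set ℚ := {x : ℚ | (|x.num| : ℝ) ≤ X ∧ (x.den : ℝ) ≤ X ∧ (rad x.den : ℝ) ≤ Y}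
    with hS
  set φ : ℚ → ℤ × ℕ := fun x => (x.num, x.den) with hφ
  have hinj : Function.Injective φ := by
    intro a b h
    exact Rat.ext (congrArg Prod.fst h) (congrArg Prod.snd h)
  set M : ℤ := ⌊X⌋ with hM
  have hM1 : 1 ≤ M := Int.le_floor.2 (by exact_mod_cast hX)
  set D := (Icc 1 ⌊X⌋₊).filter (fun b => (rad b : ℝ) ≤ Y) with hD
  set T : Finset (ℤ × ℕ) := (Icc (-M) M) ×ˢ D with hT
  have himg : φ '' S ⊆ ↑T := by
    rintro _ ⟨x, hx, rfl⟩
    obtain ⟨h1, h2, h3⟩ := hx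
    have habs : |x.num| ≤ M := Int.le_floor.2 (by exact_mod_cast h1)
    simp only [hφ, hT, hD, Finset.coe_filter, Finset.mem_coe, Finset.mem_product,
      Finset.mem_Icc, Finset.mem_filter]
    refine ⟨⟨neg_le_of_abs_le habs, le_of_abs_le habs⟩, ⟨x.pos, Nat.le_floor h2⟩, h3⟩
  have hIcc : (((Icc (-M) M : Finset ℤ)).card : ℝ) ≤ 3 * X := by
    have hnn : (0:ℤ) ≤ 2 * M + 1 := by omega
    have hMX : (M : ℝ) ≤ X := Int.floor_le X
    have h1 : (((Icc (-M) M : Finset ℤ)).card : ℝ) = 2 * (M:ℝ) + 1 := by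
      rw [Int.card_Icc, show M + 1 - (-M) = 2 * M + 1 by ring,
        show ((((2 * M + 1).toNat : ℕ)) : ℝ) = (((2 * M + 1).toNat : ℤ) : ℝ) from
          (Int.cast_natCast _).symm, Int.toNat_of_nonneg hnn]
      push_cast; ring
    rw [h1]; linarith
  have hcD : ((D.card : ℕ) : ℝ) ≤ 6 * Real.sqrt (X * Y) := card_D_le X hX hY0
  have e1 : X * Y = X ^ ((2:ℝ) - 2 * ε) := by
    rw [hY, show X * X ^ (1 - 2 * ε) = X ^ (1:ℝ) * X ^ (1 - 2 * ε) by rw [Real.rpow_one],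
      ← Real.rpow_add hX0]
    ring_nf
  have e2 : Real.sqrt (X * Y) = X ^ (1 - ε) := by
    rw [e1, Real.sqrt_eq_rpow, ← Real.rpow_mul hX0.le]
    ring_nf
  have e3 : X * X ^ (1 - ε) = X ^ ((2:ℝ) - ε) := by
    rw [show X * X ^ (1 - ε) = X ^ (1:ℝ) * X ^ (1 - ε) by rw [Real.rpow_one],
      ← Real.rpow_add hX0]
    ring_nf
  calc (S.ncard : ℝ) = ((φ '' S).ncard : ℝ) := by rw [Set.ncard_image_of_injective S hinj]
    _ ≤ (T.card : ℝ) := by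
        have h := Set.ncard_le_ncard himg T.finite_toSet
        rw [Set.ncard_coe_finset] at h
        exact_mod_cast h
    _ = (((Icc (-M) M : Finset ℤ)).card : ℝ) * (D.card : ℝ) := by
        rw [hT, Finset.card_product]; push_cast; ring
    _ ≤ (3 * X) * (6 * Real.sqrt (X * Y)) := by
        apply mul_le_mul hIcc hcD (by positivity) (by positivity)
    _ = 18 * (X * Real.sqrt (X * Y)) := by ring
    _ = 18 * X ^ (2 - ε) := by rw [e2, e3]
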